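/- Differentiability under the integral for the GFF generating functional: let μ be a probability measure on tempered distributions over ℝ⁴ such that for every Schwartz function f there exists α > 0 with ∫ exp(α ⟨ω,f⟩²) dμ(ω) < ∞ (Fernique bound). Then for any finite family f₁,…,f_n of Schwartz functions, the map (z₁,…,z_n) ↦ ∫ exp(i ∑_j z_j ⟨ω, f_j⟩) dμ(ω) is holomorphic on ℂⁿ, with ∂/∂z_j equal to ∫ i⟨ω,f_j⟩ exp(i ∑ z_k ⟨ω,f_k⟩) dμ(ω). -/

import Mathlib

open MeasureTheory

/-- Real Schwartz test functions on ℝ⁴. -/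
abbrev TestFunction4 : Type := SchwartzMap (EuclideanSpace ℝ (Fin 4)) ℝ

/-- Tempered distributions (the weak dual of Schwartz space). -/
abbrev FieldConfiguration : Type := WeakDual ℝ TestFunction4

noncomputable instance : MeasurableSpace FieldConfiguration := borel _

instance : BorelSpace FieldConfiguration := ⟨rfl⟩

lemma meas_eval (g : TestFunction4) : Measurable (fun ω : FieldConfiguration => ω g) :=
  (WeakDual.eval_continuous g).measurable

noncomputable def ellmap (n : ℕ) (x : Fin n → ℝ) : (Fin n → ℂ) →L[ℂ] ℂ :=
  Complex.I • ∑ j, (x j : ℂ) • (ContinuousLinearMap.proj (R := ℂ) (φ := fun _ : Fin n => ℂ) j)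

lemma ellmap_apply (n : ℕ) (x : Fin n → ℝ) (y : Fin n → ℂ) :
    ellmap n x y = Complex.I * ∑ j, (x j : ℂ) * y j := by
  simp [ellmap, ContinuousLinearMap.sum_apply, Finset.mul_sum, smul_eq_mul]

lemma ellmap_cont (n : ℕ) : Continuous (ellmap n) := by
  refine Continuous.const_smul ?_ Complex.I
  exact continuous_finset_sum _ fun j _ =>
    ((Complex.continuous_ofReal.comp (continuous_apply j)).smul continuous_const)

lemma ellmap_norm (n : ℕ) (x : Fin n → ℝ) : ‖ellmap n x‖ ≤ ∑ j, |x j| := by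
  rw [ellmap]
  refine (norm_smul_le Complex.I
    (∑ j, (x j : ℂ) • (ContinuousLinearMap.proj (R := ℂ) (φ := fun _ : Fin n => ℂ) j))).trans ?_
  rw [Complex.norm_I, one_mul]
  refine (norm_sum_le _ _).trans (Finset.sum_le_sum fun j _ => ?_)
  refine (norm_smul_le ((x j : ℂ))
    (ContinuousLinearMap.proj (R := ℂ) (φ := fun _ : Fin n => ℂ) j)).trans ?_
  rw [Complex.norm_real, Real.norm_eq_abs]
  have hproj : ‖(ContinuousLinearMap.proj (R := ℂ) (φ := fun _ : Fin n => ℂ) j)‖ ≤ 1 :=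
    ContinuousLinearMap.opNorm_le_bound _ zero_le_one fun y => by
      simpa using norm_le_pi_norm y j
  calc |x j| * ‖_‖ ≤ |x j| * 1 := by
        exact mul_le_mul_of_nonneg_left hproj (abs_nonneg _)
    _ = |x j| := mul_one _

noncomputable def Psi (n m : ℕ) (x : Fin n → ℝ) :
    ContinuousMultilinearMap ℂ (fun _ : Fin m => (Fin n → ℂ)) ℂ :=
  (ContinuousMultilinearMap.mkPiAlgebra ℂ (Fin m) ℂ).compContinuousLinearMap
    (fun _ => ellmap n x)

lemma Psi_cont (n m : ℕ) : Continuous (Psi n m) := by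
  have : Psi n m = (fun L : (Fin m → ((Fin n → ℂ) →L[ℂ] ℂ)) =>
      ContinuousMultilinearMap.compContinuousLinearMapLRight
        (ContinuousMultilinearMap.mkPiAlgebra ℂ (Fin m) ℂ) L) ∘
      (fun x (_ : Fin m) => ellmap n x) := rfl
  rw [this]
  exact (ContinuousMultilinearMap.compContinuousLinearMapLRight
    (ContinuousMultilinearMap.mkPiAlgebra ℂ (Fin m) ℂ)).cont.comp
    (continuous_pi fun _ => ellmap_cont n)

lemma Psi_norm (n m : ℕ) (x : Fin n → ℝ) : ‖Psi n m x‖ ≤ (∑ j, |x j|) ^ m := by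
  refine (ContinuousMultilinearMap.norm_compContinuousLinearMap_le _ _).trans ?_
  rw [ContinuousMultilinearMap.norm_mkPiAlgebra, one_mul]
  calc (∏ _i : Fin m, ‖ellmap n x‖) ≤ ∏ _i : Fin m, (∑ j, |x j|) :=
        Finset.prod_le_prod (fun _ _ => norm_nonneg _) (fun _ _ => ellmap_norm n x)
    _ = (∑ j, |x j|) ^ m := by simp

lemma Psi_apply (n m : ℕ) (x : Fin n → ℝ) (y : Fin n → ℂ) :
    Psi n m x (fun _ => y) = (ellmap n x y) ^ m := by
  simp [Psi]

section aux
variable {μ : Measure FieldConfiguration} [IsProbabilityMeasure μ]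
  (hFernique : ∀ f : TestFunction4, ∃ α : ℝ, 0 < α ∧
      Integrable (fun ω => Real.exp (α * (ω f) ^ 2)) μ)

include hFernique

lemma integrable_exp_abs (g : TestFunction4) (b : ℝ) :
    Integrable (fun ω => Real.exp (b * |ω g|)) μ := by
  obtain ⟨α, hα, hint⟩ := hFernique g
  refine Integrable.mono' (hint.const_mul (Real.exp (b ^ 2 / (4 * α))))
    (((meas_eval g).abs.const_mul b).exp.aestronglyMeasurable)
    (ae_of_all _ fun ω => ?_)
  rw [Real.norm_of_nonneg (Real.exp_nonneg _), ← Real.exp_add]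
  apply Real.exp_le_exp.2
  have h2 : |ω g| ^ 2 = (ω g) ^ 2 := sq_abs _
  have h4 : (0:ℝ) < 4 * α := by linarith
  have hC : b ^ 2 = 4 * α * (b ^ 2 / (4 * α)) := by field_simp
  have key : 4 * α * (b ^ 2 / (4 * α) + α * ω g ^ 2 - b * |ω g|)
      = (2 * α * |ω g| - b) ^ 2 := by
    linear_combination (-1 : ℝ) * hC - 4 * α ^ 2 * h2
  nlinarith [key, sq_nonneg (2 * α * |ω g| - b), hα]

variable {n : ℕ} (f : Fin n → TestFunction4)

lemma integrable_prod_exp (s : Finset (Fin n)) :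
    ∀ b : Fin n → ℝ, Integrable (fun ω => ∏ k ∈ s, Real.exp (b k * |ω (f k)|)) μ := by
  classical
  have hmeas : ∀ (t : Finset (Fin n)) (b : Fin n → ℝ),
      AEStronglyMeasurable (fun ω => ∏ k ∈ t, Real.exp (b k * |ω (f k)|)) μ := by
    intro t b
    exact (Finset.aestronglyMeasurable_fun_prod t fun k _ =>
      (((meas_eval (f k)).abs.const_mul (b k)).exp).aestronglyMeasurable)
  induction s using Finset.induction_on with
  | empty => intro b; simpa using (integrable_const (1 : ℝ))
  | insert a s ha ih =>
    intro b
    have h1 : MemLp (fun ω => Real.exp (b a * |ω (f a)|)) 2 μ := by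
      rw [memLp_two_iff_integrable_sq
        (((meas_eval (f a)).abs.const_mul (b a)).exp.aestronglyMeasurable)]
      have : (fun ω : FieldConfiguration => Real.exp (b a * |ω (f a)|) ^ 2)
          = fun ω : FieldConfiguration => Real.exp ((2 * b a) * |ω (f a)|) := by
        funext ω; rw [sq, ← Real.exp_add]; ring_nf
      rw [this]
      exact integrable_exp_abs hFernique (f a) (2 * b a)
    have h2 : MemLp (fun ω => ∏ k ∈ s, Real.exp (b k * |ω (f k)|)) 2 μ := by
      rw [memLp_two_iff_integrable_sq (hmeas s b)]
      have : (fun ω : FieldConfiguration => (∏ k ∈ s, Real.exp (b k * |ω (f k)|)) ^ 2)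
          = fun ω : FieldConfiguration =>
            ∏ k ∈ s, Real.exp ((fun k => 2 * b k) k * |ω (f k)|) := by
        funext ω
        rw [← Finset.prod_pow]
        refine Finset.prod_congr rfl fun k _ => ?_
        rw [sq, ← Real.exp_add]; ring_nf
      rw [this]
      exact ih (fun k => 2 * b k)
    have := (h2.smul h1 (p := 2) (q := 2) (r := 1)).integrable (le_refl 1)
    refine this.congr (ae_of_all _ fun ω => ?_)
    simp [Pi.smul_apply, smul_eq_mul, Finset.prod_insert ha]

/-- Products with an extra linear factor. -/
lemma integrable_abs_mul_prod_exp (j : Fin n) (b : Fin n → ℝ) :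
    Integrable (fun ω => |ω (f j)| * ∏ k, Real.exp (b k * |ω (f k)|)) μ := by
  refine Integrable.mono' (integrable_prod_exp hFernique f Finset.univ (fun k => b k + 1))
    (((meas_eval (f j)).abs.mul (Finset.measurable_prod _ fun k _ =>
      (((meas_eval (f k)).abs.const_mul (b k)).exp))).aestronglyMeasurable)
    (ae_of_all _ fun ω => ?_)
  have h0 : (0:ℝ) ≤ ∏ k, Real.exp (b k * |ω (f k)|) :=
    Finset.prod_nonneg fun k _ => (Real.exp_nonneg _)
  rw [Real.norm_of_nonneg (mul_nonneg (abs_nonneg _) h0)]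
  have h1 : |ω (f j)| ≤ ∏ k, Real.exp (|ω (f k)|) := by
    calc |ω (f j)| ≤ Real.exp (|ω (f j)|) :=
          (Real.add_one_le_exp _).trans' (by linarith [abs_nonneg (ω (f j))])
      _ ≤ Real.exp (∑ k, |ω (f k)|) :=
          Real.exp_le_exp.2 (Finset.single_le_sum (f := fun k => |ω (f k)|)
            (fun k _ => abs_nonneg _) (Finset.mem_univ j))
      _ = ∏ k, Real.exp (|ω (f k)|) := Real.exp_sum _ _
  calc |ω (f j)| * ∏ k, Real.exp (b k * |ω (f k)|)
      ≤ (∏ k, Real.exp (|ω (f k)|)) * ∏ k, Real.exp (b k * |ω (f k)|) :=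
        mul_le_mul_of_nonneg_right h1 h0
    _ = ∏ k, Real.exp ((b k + 1) * |ω (f k)|) := by
        rw [← Finset.prod_mul_distrib]
        refine Finset.prod_congr rfl fun k _ => ?_
        rw [← Real.exp_add]; ring_nf

end aux

theorem generating_functional_holomorphic
    (μ : Measure FieldConfiguration) [IsProbabilityMeasure μ]
    (hFernique : ∀ f : TestFunction4, ∃ α : ℝ, 0 < α ∧
      Integrable (fun ω => Real.exp (α * (ω f) ^ 2)) μ)
    (n : ℕ) (f : Fin n → TestFunction4) :
    (∀ z : Fin n → ℂ, AnalyticAt ℂ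
      (fun z : Fin n → ℂ =>
        ∫ ω, Complex.exp (Complex.I * ∑ j, z j * ((ω (f j) : ℝ) : ℂ)) ∂μ) z) ∧
    (∀ (z : Fin n → ℂ) (j : Fin n),
      HasDerivAt (fun w : ℂ =>
          ∫ ω, Complex.exp (Complex.I *
            ∑ k, Function.update z j w k * ((ω (f k) : ℝ) : ℂ)) ∂μ)
        (∫ ω, Complex.I * ((ω (f j) : ℝ) : ℂ) *
          Complex.exp (Complex.I * ∑ k, z k * ((ω (f k) : ℝ) : ℂ)) ∂μ)
        (z j)) := by
  classical
  -- norm of the exponential integrand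
  have hnorm : ∀ (v : Fin n → ℂ) (ω : FieldConfiguration),
      ‖Complex.exp (Complex.I * ∑ k, v k * ((ω (f k) : ℝ) : ℂ))‖
        = Real.exp (-(∑ k, (v k).im * ω (f k))) := by
    intro v ω
    rw [Complex.norm_exp]
    congr 1
    rw [Complex.mul_re, Complex.I_re, Complex.I_im, Complex.im_sum]
    simp [Complex.mul_im]
  have hbnd : ∀ (v : Fin n → ℂ) (ω : FieldConfiguration),
      ‖Complex.exp (Complex.I * ∑ k, v k * ((ω (f k) : ℝ) : ℂ))‖
        ≤ ∏ k, Real.exp (|(v k).im| * |ω (f k)|) := by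
    intro v ω
    rw [hnorm, ← Real.exp_sum]
    apply Real.exp_le_exp.2
    rw [← Finset.sum_neg_distrib]
    refine Finset.sum_le_sum fun k _ => ?_
    calc -((v k).im * ω (f k)) ≤ |(v k).im * ω (f k)| := neg_le_abs _
      _ = |(v k).im| * |ω (f k)| := abs_mul _ _
  have hmeasC : ∀ v : Fin n → ℂ, Measurable
      (fun ω : FieldConfiguration => Complex.exp (Complex.I * ∑ k, v k * ((ω (f k) : ℝ) : ℂ))) := by
    intro v
    exact Complex.continuous_exp.measurable.comp
      ((Finset.measurable_sum _ fun k _ =>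
        (Complex.measurable_ofReal.comp (meas_eval (f k))).const_mul (v k)).const_mul Complex.I)
  constructor
  · -- Part 1: analyticity
    intro z₀
    set X : FieldConfiguration → (Fin n → ℝ) := fun ω k => ω (f k) with hX
    have hXmeas : Measurable X := measurable_pi_lambda _ fun k => meas_eval (f k)
    set S : FieldConfiguration → ℝ := fun ω => ∑ k, |ω (f k)| with hSdef
    have hSnn : ∀ ω, 0 ≤ S ω := fun ω => Finset.sum_nonneg fun k _ => abs_nonneg _
    have hSmeas : Measurable S := Finset.measurable_sum _ fun k _ => (meas_eval (f k)).abs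
    have hexpS : ∀ r : ℝ, Integrable (fun ω => Real.exp (r * S ω)) μ := by
      intro r
      refine (integrable_prod_exp hFernique f Finset.univ (fun _ => r)).congr
        (ae_of_all _ fun ω => ?_)
      rw [hSdef]
      simp only
      rw [Finset.mul_sum, Real.exp_sum]
    have hSpowInt : ∀ m : ℕ, Integrable (fun ω => S ω ^ m) μ := by
      intro m
      refine Integrable.mono' ((hexpS 1).const_mul (m.factorial : ℝ))
        ((hSmeas.pow_const m).aestronglyMeasurable) (ae_of_all _ fun ω => ?_)
      rw [Real.norm_of_nonneg (pow_nonneg (hSnn ω) m)]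
      have h1 : S ω ^ m / m.factorial ≤ Real.exp (S ω) := by
        calc S ω ^ m / m.factorial ≤ ∑ i ∈ Finset.range (m + 1), S ω ^ i / i.factorial :=
              Finset.single_le_sum (f := fun i => S ω ^ i / (i.factorial : ℝ))
                (fun i _ => by positivity) (Finset.self_mem_range_succ m)
          _ ≤ Real.exp (S ω) := Real.sum_le_exp_of_nonneg (hSnn ω) (m + 1)
      have hm : (0:ℝ) < (m.factorial : ℝ) := by positivity
      calc S ω ^ m = S ω ^ m / m.factorial * m.factorial := by field_simp
        _ ≤ Real.exp (S ω) * m.factorial := mul_le_mul_of_nonneg_right h1 (le_of_lt hm)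
        _ = (m.factorial : ℝ) * Real.exp (1 * S ω) := by rw [one_mul]; ring
    have hPsiInt : ∀ m, Integrable (fun ω => Psi n m (X ω)) μ := by
      intro m
      refine Integrable.mono' (hSpowInt m)
        ((Psi_cont n m).comp_aestronglyMeasurable hXmeas.aestronglyMeasurable)
        (ae_of_all _ fun ω => ?_)
      exact Psi_norm n m (X ω)
    set IS : ℕ → ℝ := fun m => ∫ ω, S ω ^ m ∂μ with hIS
    have hISnn : ∀ m, 0 ≤ IS m := fun m => integral_nonneg fun ω => pow_nonneg (hSnn ω) m
    set p : FormalMultilinearSeries ℂ (Fin n → ℂ) ℂ :=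
      fun m => ((m.factorial : ℂ))⁻¹ • ∫ ω, Psi n m (X ω) ∂μ with hp
    have hpnorm : ∀ m, ‖p m‖ ≤ (m.factorial : ℝ)⁻¹ * IS m := by
      intro m
      rw [hp]
      simp only
      rw [norm_smul ((m.factorial : ℂ))⁻¹ (∫ ω, Psi n m (X ω) ∂μ), norm_inv,
        Complex.norm_natCast]
      refine mul_le_mul_of_nonneg_left ?_ (by positivity)
      refine (norm_integral_le_integral_norm _).trans ?_
      rw [hIS]
      exact integral_mono (hPsiInt m).norm (hSpowInt m) (fun ω => Psi_norm n m (X ω))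
    have hsum_main : ∀ r : ℝ, 0 ≤ r → Summable (fun m => (m.factorial : ℝ)⁻¹ * IS m * r ^ m) := by
      intro r hr
      refine summable_of_sum_range_le (c := ∫ ω, Real.exp (r * S ω) ∂μ)
        (fun m => by positivity) (fun N => ?_)
      have hint : ∀ m : ℕ, Integrable (fun ω => (r * S ω) ^ m / m.factorial) μ := by
        intro m
        refine (((hSpowInt m).const_mul (r ^ m / m.factorial))).congr (ae_of_all _ fun ω => ?_)
        simp only [mul_pow]; ring
      have hterm : ∀ m : ℕ, (m.factorial : ℝ)⁻¹ * IS m * r ^ m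
          = ∫ ω, (r * S ω) ^ m / m.factorial ∂μ := by
        intro m
        calc (m.factorial : ℝ)⁻¹ * IS m * r ^ m = ((r ^ m / m.factorial)) * ∫ ω, S ω ^ m ∂μ := by
              rw [hIS]; ring
          _ = ∫ ω, (r ^ m / m.factorial) * S ω ^ m ∂μ := (integral_const_mul _ _).symm
          _ = ∫ ω, (r * S ω) ^ m / m.factorial ∂μ :=
              integral_congr_ae (ae_of_all _ fun ω => by simp only [mul_pow]; ring)
      rw [Finset.sum_congr rfl fun m _ => hterm m,
        ← integral_finset_sum _ (fun m _ => hint m)]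
      refine integral_mono (integrable_finset_sum _ fun m _ => hint m) (hexpS r) (fun ω => ?_)
      exact Real.sum_le_exp_of_nonneg (mul_nonneg hr (hSnn ω)) N
    have hradius : p.radius = ⊤ := by
      refine p.radius_eq_top_of_summable_norm (fun r => ?_)
      refine Summable.of_nonneg_of_le (fun m => by positivity) (fun m => ?_)
        (hsum_main r r.coe_nonneg)
      exact mul_le_mul_of_nonneg_right (hpnorm m) (pow_nonneg r.coe_nonneg m)
    have hFP : HasFPowerSeriesOnBall (fun z : Fin n → ℂ =>
        ∫ ω, Complex.exp (Complex.I * ∑ j, z j * ((ω (f j) : ℝ) : ℂ)) ∂μ) p 0 ⊤ := by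
      refine ⟨by rw [hradius], ENNReal.zero_lt_top, ?_⟩
      intro y _
      set G : ℕ → FieldConfiguration → ℂ :=
        fun m ω => ((m.factorial : ℂ))⁻¹ • (ellmap n (X ω) y) ^ m with hG
      have hGmeas : ∀ m, AEStronglyMeasurable (G m) μ := by
        intro m
        have h1 : Continuous fun x : Fin n → ℝ => ellmap n x y := by
          simp only [ellmap_apply]
          exact continuous_const.mul (continuous_finset_sum _ fun j _ =>
            ((Complex.continuous_ofReal.comp (continuous_apply j)).mul continuous_const))
        exact ((continuous_const (y := ((m.factorial : ℂ))⁻¹)).smul (h1.pow m)).comp_aestronglyMeasurable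
          hXmeas.aestronglyMeasurable
      have hGbnd : ∀ m ω, ‖G m ω‖ ≤ (m.factorial : ℝ)⁻¹ * ‖y‖ ^ m * S ω ^ m := by
        intro m ω
        rw [hG]
        simp only
        rw [norm_smul ((m.factorial : ℂ))⁻¹ ((ellmap n (X ω) y) ^ m), norm_inv,
          Complex.norm_natCast, norm_pow]
        have h1 : ‖ellmap n (X ω) y‖ ≤ S ω * ‖y‖ := by
          refine (ContinuousLinearMap.le_opNorm _ _).trans ?_
          exact mul_le_mul_of_nonneg_right (ellmap_norm n (X ω)) (norm_nonneg y)
        calc (m.factorial : ℝ)⁻¹ * ‖ellmap n (X ω) y‖ ^ m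
            ≤ (m.factorial : ℝ)⁻¹ * (S ω * ‖y‖) ^ m := by
              refine mul_le_mul_of_nonneg_left ?_ (by positivity)
              exact pow_le_pow_left₀ (norm_nonneg _) h1 m
          _ = (m.factorial : ℝ)⁻¹ * ‖y‖ ^ m * S ω ^ m := by rw [mul_pow]; ring
      have hGint : ∀ m, Integrable (G m) μ := by
        intro m
        refine Integrable.mono' ((hSpowInt m).const_mul ((m.factorial : ℝ)⁻¹ * ‖y‖ ^ m))
          (hGmeas m) (ae_of_all _ fun ω => ?_)
        calc ‖G m ω‖ ≤ (m.factorial : ℝ)⁻¹ * ‖y‖ ^ m * S ω ^ m := hGbnd m ω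
          _ = (m.factorial : ℝ)⁻¹ * ‖y‖ ^ m * S ω ^ m := rfl
      have hGsum : Summable fun m => ∫ ω, ‖G m ω‖ ∂μ := by
        refine Summable.of_nonneg_of_le
          (fun m => integral_nonneg fun ω => norm_nonneg _) (fun m => ?_)
          (hsum_main ‖y‖ (norm_nonneg y))
        calc ∫ ω, ‖G m ω‖ ∂μ ≤ ∫ ω, ((m.factorial : ℝ)⁻¹ * ‖y‖ ^ m) * S ω ^ m ∂μ :=
              integral_mono (hGint m).norm ((hSpowInt m).const_mul _)
                (fun ω => by
                  refine (hGbnd m ω).trans (le_of_eq ?_)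
                  ring)
          _ = (m.factorial : ℝ)⁻¹ * IS m * ‖y‖ ^ m := by rw [integral_const_mul, hIS]; ring
      have key := hasSum_integral_of_summable_integral_norm hGint hGsum
      have happly : ∀ m, (p m fun _ => y) = ∫ ω, G m ω ∂μ := by
        intro m
        rw [hp]
        simp only [ContinuousMultilinearMap.smul_apply]
        have hcomm := (ContinuousMultilinearMap.apply ℂ
          (fun _ : Fin m => (Fin n → ℂ)) ℂ (fun _ => y)).integral_comp_comm (hPsiInt m)
        rw [hG]
        rw [integral_smul]
        congr 1
        simp only [ContinuousMultilinearMap.apply_apply] at hcomm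
        rw [← hcomm]
        refine integral_congr_ae (ae_of_all _ fun ω => ?_)
        simp [ContinuousMultilinearMap.apply_apply, Psi_apply]
      have htsum : (fun ω : FieldConfiguration => ∑' m, G m ω)
          = fun ω => Complex.exp (Complex.I * ∑ j, y j * ((ω (f j) : ℝ) : ℂ)) := by
        funext ω
        have harg : ellmap n (X ω) y = Complex.I * ∑ j, y j * ((ω (f j) : ℝ) : ℂ) := by
          rw [ellmap_apply]
          congr 1
          exact Finset.sum_congr rfl fun j _ => mul_comm _ _
        have he : Complex.exp (ellmap n (X ω) y) = ∑' m, (ellmap n (X ω) y) ^ m / m.factorial := by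
          rw [Complex.exp_eq_exp_ℂ, NormedSpace.exp_eq_tsum_div]
        rw [hG]
        simp only
        rw [← harg, he]
        refine tsum_congr fun m => ?_
        rw [smul_eq_mul, div_eq_mul_inv, mul_comm]
      have hfix : (∫ ω, (∑' m, G m ω) ∂μ)
          = ∫ ω, Complex.exp (Complex.I * ∑ j, y j * ((ω (f j) : ℝ) : ℂ)) ∂μ :=
        integral_congr_ae (ae_of_all _ fun ω => congrFun htsum ω)
      rw [hfix] at key
      have hfun2 : (fun m => p m fun _ => y) = fun m => ∫ ω, G m ω ∂μ := funext happly
      simp only [zero_add]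
      rw [hfun2]
      exact key
    exact hFP.analyticAt_of_mem (by rw [EMetric.mem_ball]; exact edist_lt_top z₀ 0)
  · intro z j
    set F : ℂ → FieldConfiguration → ℂ := fun w ω =>
      Complex.exp (Complex.I * ∑ k, Function.update z j w k * ((ω (f k) : ℝ) : ℂ)) with hF
    set F' : ℂ → FieldConfiguration → ℂ := fun w ω =>
      Complex.I * ((ω (f j) : ℝ) : ℂ) * F w ω with hF'
    set bound : FieldConfiguration → ℝ := fun ω =>
      |ω (f j)| * ∏ k, Real.exp ((|(z k).im| + 1) * |ω (f k)|) with hbound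
    have key := hasDerivAt_integral_of_dominated_loc_of_deriv_le (μ := μ)
      (F := F) (F' := F') (x₀ := z j) (bound := bound) (Metric.ball_mem_nhds (z j) one_pos)
      (Filter.Eventually.of_forall fun w => ((hmeasC _).aestronglyMeasurable))
      ?_ ?_ ?_ ?_ ?_
    · have := key.2
      have heq : F' (z j) = fun ω => Complex.I * ((ω (f j) : ℝ) : ℂ) *
          Complex.exp (Complex.I * ∑ k, z k * ((ω (f k) : ℝ) : ℂ)) := by
        funext ω
        rw [hF', hF]
        simp [Function.update_eq_self]
      rw [heq] at this
      exact this
    · -- Integrable (F (z j))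
      refine Integrable.mono'
        (integrable_prod_exp hFernique f Finset.univ (fun k => |(z k).im|))
        ((hmeasC _).aestronglyMeasurable) (ae_of_all _ fun ω => ?_)
      have := hbnd (Function.update z j (z j)) ω
      simp only [hF, Function.update_eq_self]
      simpa [Function.update_eq_self] using this
    · -- AEStronglyMeasurable (F' (z j))
      exact ((measurable_const.mul
        (Complex.measurable_ofReal.comp (meas_eval (f j)))).mul (hmeasC _)).aestronglyMeasurable
    · -- bound
      refine ae_of_all _ fun ω w hw => ?_
      rw [hF']
      rw [norm_mul, norm_mul, Complex.norm_I, one_mul, Complex.norm_real, Real.norm_eq_abs]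
      rw [hbound]
      refine mul_le_mul_of_nonneg_left ?_ (abs_nonneg _)
      refine (hbnd _ ω).trans ?_
      refine Finset.prod_le_prod (fun k _ => Real.exp_nonneg _) fun k _ => ?_
      apply Real.exp_le_exp.2
      refine mul_le_mul_of_nonneg_right ?_ (abs_nonneg _)
      by_cases hk : k = j
      · subst hk
        rw [Function.update_self]
        calc |w.im| = |(z k).im + (w - z k).im| := by rw [Complex.sub_im]; ring_nf
          _ ≤ |(z k).im| + |(w - z k).im| := abs_add_le _ _
          _ ≤ |(z k).im| + 1 := by
              refine add_le_add le_rfl (le_of_lt ?_)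
              refine lt_of_le_of_lt (Complex.abs_im_le_norm _) ?_
              simpa [Complex.dist_eq] using Metric.mem_ball.1 hw
      · rw [Function.update_of_ne hk]
        linarith [abs_nonneg ((z k).im)]
    · -- bound integrable
      exact integrable_abs_mul_prod_exp hFernique f j (fun k => |(z k).im| + 1)
    · -- differentiability
      refine ae_of_all _ fun ω w hw => ?_
      set cj : ℂ := ((ω (f j) : ℝ) : ℂ) with hcj
      set A : ℂ := ∑ k ∈ Finset.univ.erase j, z k * ((ω (f k) : ℝ) : ℂ) with hA
      have sum_eq : ∀ u : ℂ,
          (∑ k, Function.update z j u k * ((ω (f k) : ℝ) : ℂ)) = u * cj + A := by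
        intro u
        have step : ∀ k : Fin n, Function.update z j u k * ((ω (f k) : ℝ) : ℂ)
            = Function.update (fun i => z i * ((ω (f i) : ℝ) : ℂ)) j (u * cj) k := by
          intro k
          by_cases hk : k = j
          · subst hk; simp [hcj]
          · simp [Function.update_of_ne hk]
        rw [Finset.sum_congr rfl fun k _ => step k,
          Finset.sum_update_of_mem (Finset.mem_univ j)]
        rw [hA, Finset.sdiff_singleton_eq_erase]
      have h1 : HasDerivAt (fun u : ℂ => Complex.I * (u * cj + A)) (Complex.I * cj) w := by
        simpa using (((hasDerivAt_id w).mul_const cj).add_const A).const_mul Complex.I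
      have h2 := h1.cexp
      have hfun : (fun u : ℂ => F u ω) = fun u => Complex.exp (Complex.I * (u * cj + A)) := by
        funext u
        simp only [hF]
        rw [sum_eq u]
      have hval : F' w ω = Complex.exp (Complex.I * (w * cj + A)) * (Complex.I * cj) := by
        simp only [hF', hF]
        rw [sum_eq w]
        ring
      rw [hval, hfun]
      exact h2
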